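/- Let 𝒯 be a locally finite tree (each vertex of finite degree ≥ 2) with directed edges ℰ and vertices 𝒱, and let A be an abelian group. The map φ_s restricted to ℱ₀(ℰ,A) → ℱ(𝒱,A) is surjective when 𝒯 is the (q+1)-regular tree with q ≥ 1; its kernel HC(A) (the group of A-valued harmonic cocycles) thus fits in a short exact sequence 0 → HC(A) → ℱ₀(ℰ,A) → ℱ(𝒱,A) → 0. -/

import Mathlib

open SimpleGraph

namespace RegTreeAux

attribute [local instance] Classical.propDecidable Classical.decEq

variable {V : Type*} {G : SimpleGraph V}
  (ht : ∀ v w : V, ∃! p : G.Walk v w, p.IsPath) (r : V)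

/-- The unique path from `v` to the root `r`. -/
noncomputable def pt (v : V) : G.Walk v r := (ht v r).choose

lemma pt_isPath (v : V) : (pt ht r v).IsPath := (ht v r).choose_spec.1

lemma pt_unique {v : V} (p : G.Walk v r) (hp : p.IsPath) : p = pt ht r v :=
  (ht v r).choose_spec.2 p hp

lemma pt_r : pt ht r r = Walk.nil := (pt_unique ht r Walk.nil (Walk.IsPath.nil)).symm

/-- The parent of `v` (junk value `r` at `v = r`). -/
noncomputable def par (v : V) : V := (pt ht r v).getVert 1

lemma pt_not_nil {v : V} (hv : v ≠ r) : ¬ (pt ht r v).Nil :=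
  Walk.not_nil_of_ne hv

lemma adj_par {v : V} (hv : v ≠ r) : G.Adj v (par ht r v) :=
  Walk.adj_snd (pt_not_nil ht r hv)

lemma pt_par {v : V} (hv : v ≠ r) : (pt ht r v).tail = pt ht r (par ht r v) :=
  pt_unique ht r _ ((pt_isPath ht r v).tail)

lemma len_par {v : V} (hv : v ≠ r) :
    (pt ht r (par ht r v)).length + 1 = (pt ht r v).length := by
  rw [← pt_par ht r hv]
  exact Walk.length_tail_add_one (pt_not_nil ht r hv)

lemma dich {v w : V} (h : G.Adj v w) :
    (v ≠ r ∧ par ht r v = w) ∨ (w ≠ r ∧ par ht r w = v) := by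
  by_cases hw : w ∈ (pt ht r v).support
  · left
    have hv : v ≠ r := by
      rintro rfl
      rw [pt_r] at hw
      simp only [Walk.support_nil, List.mem_singleton] at hw
      exact h.ne' hw
    refine ⟨hv, ?_⟩
    have htake : (pt ht r v).takeUntil w hw = Walk.cons h Walk.nil := by
      have h1 : ((pt ht r v).takeUntil w hw).IsPath :=
        (pt_isPath ht r v).takeUntil hw
      have h2 : (Walk.cons h (Walk.nil : G.Walk w w)).IsPath := by
        simp [Walk.cons_isPath_iff, h.ne]
      rw [(ht v w).choose_spec.2 _ h1, (ht v w).choose_spec.2 _ h2]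
    have hspec := (pt ht r v).take_spec hw
    rw [htake] at hspec
    unfold par
    rw [← hspec]
    simp
  · right
    have hwr : w ≠ r := by
      intro h'
      apply hw
      rw [h']
      exact Walk.end_mem_support _
    refine ⟨hwr, ?_⟩
    have hcons : (Walk.cons h.symm (pt ht r v)).IsPath := by
      rw [Walk.cons_isPath_iff]
      exact ⟨pt_isPath ht r v, hw⟩
    have := pt_unique ht r _ hcons
    unfold par
    rw [← this]
    simp [Walk.getVert_cons_succ]

lemma not_both {v w : V} :
    ¬ ((v ≠ r ∧ par ht r v = w) ∧ (w ≠ r ∧ par ht r w = v)) := by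
  rintro ⟨⟨hv, hpv⟩, ⟨hw, hpw⟩⟩
  have h1 := len_par ht r hv
  have h2 := len_par ht r hw
  rw [hpv] at h1
  rw [hpw] at h2
  omega

/-- The fuel-indexed recursion computing the "toward-parent" values. -/
noncomputable def tf (par c : V → V) {A : Type*} [AddCommGroup A] (F : V → A) :
    ℕ → V → A
  | 0 => fun _ => 0
  | n + 1 => fun v =>
      if v = r then 0
      else if v = c (par v) then tf par c F n (par v) - F (par v) else 0

/-- The function `T`. -/
noncomputable def tval (c : V → V) {A : Type*} [AddCommGroup A] (F : V → A) (v : V) : A :=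
  tf r (par ht r) c F (pt ht r v).length v

lemma tval_r (c : V → V) {A : Type*} [AddCommGroup A] (F : V → A) :
    tval ht r c F r = 0 := by
  unfold tval
  rw [pt_r]
  rfl

lemma tval_ne (c : V → V) {A : Type*} [AddCommGroup A] (F : V → A) {v : V} (hv : v ≠ r) :
    tval ht r c F v =
      if v = c (par ht r v) then tval ht r c F (par ht r v) - F (par ht r v) else 0 := by
  unfold tval
  rw [← len_par ht r hv]
  simp only [tf, if_neg hv]

lemma exists_child {q : ℕ} (hq : 1 ≤ q) [G.LocallyFinite]
    (hreg : G.IsRegularOfDegree (q + 1)) (v : V) :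
    ∃ w, G.Adj v w ∧ w ≠ r ∧ par ht r w = v := by
  by_cases hv : v = r
  · have hcard : 0 < (G.neighborFinset v).card := by
      rw [card_neighborFinset_eq_degree, hreg v]; omega
    obtain ⟨w, hw⟩ := Finset.card_pos.mp hcard
    have hadj : G.Adj v w := by rwa [mem_neighborFinset] at hw
    rcases dich ht r hadj with ⟨h1, _⟩ | h2
    · exact absurd hv h1
    · exact ⟨w, hadj, h2.1, h2.2⟩
  · have hcard : 1 < (G.neighborFinset v).card := by
      rw [card_neighborFinset_eq_degree, hreg v]; omega
    obtain ⟨w, hw, hne⟩ := Finset.exists_mem_ne hcard (par ht r v)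
    have hadj : G.Adj v w := by rwa [mem_neighborFinset] at hw
    rcases dich ht r hadj with ⟨_, h1⟩ | h2
    · exact absurd h1.symm hne
    · exact ⟨w, hadj, h2.1, h2.2⟩

lemma exists_T (c : V → V) {A : Type*} [AddCommGroup A] (F : V → A) :
    ∃ T : V → A, T r = 0 ∧ ∀ v, v ≠ r →
      T v = if v = c (par ht r v) then T (par ht r v) - F (par ht r v) else 0 :=
  ⟨tval ht r c F, tval_r ht r c F, fun _ hv => tval_ne ht r c F hv⟩

end RegTreeAux

/-- Let `𝒯` be the `(q+1)`-regular tree, `q ≥ 1`, with directed edges the darts, and `A` an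
abelian group.  The degeneracy map `φ_s : ℱ₀(ℰ,A) → ℱ(𝒱,A)`, `φ_s(μ)(v) = Σ_{s(e)=v} μ(e)`,
restricted to functions `μ` on directed edges with `μ(e) + μ(ē) = 0`, is surjective.  Its
kernel `HC(A)`, the group of `A`-valued harmonic cocycles, thus fits in a short exact
sequence `0 → HC(A) → ℱ₀(ℰ,A) → ℱ(𝒱,A) → 0`. -/
theorem source_degeneracy_surjective_on_regular_tree
    {V : Type*} (G : SimpleGraph V) [G.LocallyFinite] (q : ℕ) (hq : 1 ≤ q)
    (htree : G.IsTree) (hreg : G.IsRegularOfDegree (q + 1))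
    (A : Type*) [AddCommGroup A] (F : V → A) :
    ∃ μ : G.Dart → A, (∀ e : G.Dart, μ e + μ e.symm = 0) ∧
      ∀ v : V, ∑ᶠ e ∈ {e : G.Dart | e.fst = v}, μ e = F v := by
  classical
  obtain hV | hV := isEmpty_or_nonempty V
  · exact ⟨fun _ => 0, fun e => by simp, fun v => (hV.false v).elim⟩
  obtain ⟨r⟩ := hV
  have ht : ∀ v w : V, ∃! p : G.Walk v w, p.IsPath := htree.existsUnique_path
  choose c hc1 hc2 hc3 using RegTreeAux.exists_child ht r hq hreg
  obtain ⟨T, hTr, hTne⟩ := RegTreeAux.exists_T ht r c F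
  refine ⟨fun e => if e.fst ≠ r ∧ RegTreeAux.par ht r e.fst = e.snd
      then T e.fst else - T e.snd, ?_, ?_⟩
  · -- antisymmetry
    intro e
    have hsf : e.symm.fst = e.snd := rfl
    have hss : e.symm.snd = e.fst := rfl
    rcases RegTreeAux.dich ht r e.adj with h1 | h2
    · have h2' : ¬ (e.snd ≠ r ∧ RegTreeAux.par ht r e.snd = e.fst) := fun h2 =>
        RegTreeAux.not_both ht r ⟨h1, h2⟩
      simp only [hsf, hss, if_pos h1, if_neg h2']
      abel
    · have h1' : ¬ (e.fst ≠ r ∧ RegTreeAux.par ht r e.fst = e.snd) := fun h1 =>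
        RegTreeAux.not_both ht r ⟨h1, h2⟩
      simp only [hsf, hss, if_neg h1', if_pos h2]
      abel
  · -- source sums
    intro v
    have hbij : Set.BijOn (fun e : G.Dart => e.snd) {e : G.Dart | e.fst = v} (G.neighborSet v) := by
      refine ⟨?_, ?_, ?_⟩
      · rintro e (he : e.fst = v)
        exact he ▸ e.adj
      · rintro e1 (he1 : e1.fst = v) e2 (he2 : e2.fst = v) hsnd
        exact SimpleGraph.Dart.ext _ _ (Prod.ext (he1.trans he2.symm) hsnd)
      · rintro w (hw : G.Adj v w)
        exact ⟨⟨(v, w), hw⟩, rfl, rfl⟩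
    rw [finsum_mem_eq_of_bijOn (fun e : G.Dart => e.snd) hbij
      (g := fun w => if v ≠ r ∧ RegTreeAux.par ht r v = w then T v else - T w)
      (fun e he => by rw [Set.mem_setOf_eq] at he; rw [he])]
    rw [← Set.coe_toFinset (G.neighborSet v), finsum_mem_coe_finset,
      ← SimpleGraph.neighborFinset_def]
    rcases eq_or_ne v r with hv | hv
    · subst hv
      have hcongr : ∀ w ∈ G.neighborFinset v,
          (if v ≠ v ∧ RegTreeAux.par ht v v = w then T v else - T w)
            = if w = c v then F v else 0 := by
        intro w hw
        rw [SimpleGraph.mem_neighborFinset] at hw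
        have hwv : w ≠ v := hw.ne'
        rcases RegTreeAux.dich ht v hw with h1 | h2
        · exact absurd rfl h1.1
        rw [if_neg (by simp)]
        rw [hTne w h2.1, h2.2, hTr]
        split <;> simp
      rw [Finset.sum_congr rfl hcongr, Finset.sum_ite_eq' (G.neighborFinset v) (c v)]
      rw [if_pos (by rw [SimpleGraph.mem_neighborFinset]; exact hc1 v)]
    · have hmem : RegTreeAux.par ht r v ∈ G.neighborFinset v := by
        rw [SimpleGraph.mem_neighborFinset]; exact RegTreeAux.adj_par ht r hv
      rw [← Finset.add_sum_erase _ _ hmem, if_pos ⟨hv, rfl⟩]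
      have hcongr : ∀ w ∈ (G.neighborFinset v).erase (RegTreeAux.par ht r v),
          (if v ≠ r ∧ RegTreeAux.par ht r v = w then T v else - T w)
            = if w = c v then -(T v - F v) else 0 := by
        intro w hw
        obtain ⟨hwp, hw⟩ := Finset.mem_erase.mp hw
        rw [SimpleGraph.mem_neighborFinset] at hw
        rcases RegTreeAux.dich ht r hw with h1 | h2
        · exact absurd h1.2.symm hwp
        rw [if_neg (fun h => hwp h.2.symm)]
        rw [hTne w h2.1, h2.2]
        split <;> simp
      rw [Finset.sum_congr rfl hcongr,
        Finset.sum_ite_eq' ((G.neighborFinset v).erase (RegTreeAux.par ht r v)) (c v)]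
      have hcv : c v ∈ (G.neighborFinset v).erase (RegTreeAux.par ht r v) := by
        rw [Finset.mem_erase, SimpleGraph.mem_neighborFinset]
        refine ⟨?_, hc1 v⟩
        intro hceq
        exact RegTreeAux.not_both ht r (v := v) (w := RegTreeAux.par ht r v)
          ⟨⟨hv, rfl⟩, hceq ▸ hc2 v, by rw [← hceq]; exact hc3 v⟩
      rw [if_pos hcv]
      abel
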